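/- arXiv:1503.07717 — 5 statements merged into one kernel-verified Lean document; each statement's English description precedes it below -/
import Mathlib

section
/- Answer sets of a normal propositional program are incomparable: if X and Y are both answer sets of P and X ⊆ Y, then X = Y. -/
structure Rule (α : Type) where
  head : α
  pos : Set α
  neg : Set α

variable {α : Type}

def TP (P : Set (Rule α)) (X : Set α) : Set α :=
  {a | ∃ r ∈ P, r.head = a ∧ r.pos ⊆ X}

def Cn (P : Set (Rule α)) : Set α :=
  ⋂₀ {X | TP P X ⊆ X}

def reduct (P : Set (Rule α)) (X : Set α) : Set (Rule α) :=
  {r' | ∃ r ∈ P, r.neg ∩ X = ∅ ∧ r' = ⟨r.head, r.pos, ∅⟩}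

def AnswerSet (P : Set (Rule α)) (X : Set α) : Prop :=
  X = Cn (reduct P X)

def GR (P : Set (Rule α)) (X : Set α) : Set (Rule α) :=
  {r ∈ P | r.pos ⊆ X ∧ r.neg ∩ X = ∅}

def heads (R : Set (Rule α)) : Set α := Rule.head '' R

def negs (R : Set (Rule α)) : Set α := ⋃ r ∈ R, r.neg

def prefixSet (l : List (Rule α)) (i : ℕ) : Set (Rule α) :=
  {r | ∃ j < i, l[j]? = some r}

def Grounded (R : Set (Rule α)) : Prop :=
  ∃ l : List (Rule α), l.Nodup ∧ (∀ r, r ∈ R ↔ r ∈ l) ∧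
    ∀ i (hi : i < l.length), (l.get ⟨i, hi⟩).pos ⊆ heads (prefixSet l i)

theorem answerSets_incomparable (α : Type) (P : Set (Rule α)) (X Y : Set α)
    (hX : AnswerSet P X) (hY : AnswerSet P Y) (hXY : X ⊆ Y) : X = Y := by
  have hred : reduct P Y ⊆ reduct P X := by
    rintro r' ⟨r, hr, hneg, rfl⟩
    exact ⟨r, hr, Set.eq_empty_of_subset_empty
      (hneg ▸ Set.inter_subset_inter_right _ hXY), rfl⟩
  have hCn : Cn (reduct P Y) ⊆ Cn (reduct P X) := by
    apply Set.sInter_subset_sInter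
    intro Z hZ
    refine Set.Subset.trans ?_ hZ
    rintro a ⟨r, hr, h⟩
    exact ⟨r, hred hr, h⟩
  exact le_antisymm hXY (hY ▸ hX ▸ hCn)
end

section
/- Let P be a normal propositional program and X an atom set. If the set of generating rules GR_P(X) is grounded, then Cn(GR_P(X)^∅) = head(GR_P(X)). -/
variable {α : Type}

lemma Cn_closed (Q : Set (Rule α)) : TP Q (Cn Q) ⊆ Cn Q := by
  intro a ha Y hY
  obtain ⟨r, hr, hh, hpos⟩ := ha
  exact hY ⟨r, hr, hh, fun x hx => hpos hx Y hY⟩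

theorem grounded_Cn_eq_heads (α : Type) (P : Set (Rule α)) (X : Set α)
    (hg : Grounded (GR P X)) :
    Cn (reduct (GR P X) ∅) = heads (GR P X) := by
  obtain ⟨l, hnd, hmem, hpre⟩ := hg
  apply Set.Subset.antisymm
  · -- heads is closed under TP of the reduct
    intro a ha
    apply ha (heads (GR P X))
    intro b hb
    obtain ⟨r', hr', hh, _⟩ := hb
    obtain ⟨r, hr, _, hr'eq⟩ := hr'
    exact ⟨r, hr, by rw [← hh, hr'eq]⟩
  · rintro a ⟨r, hr, rfl⟩
    rw [hmem] at hr
    obtain ⟨⟨i, hi⟩, rfl⟩ := List.mem_iff_get.mp hr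
    clear hr
    induction i using Nat.strong_induction_on with
    | _ i IH =>
      apply Cn_closed
      refine ⟨⟨(l.get ⟨i, hi⟩).head, (l.get ⟨i, hi⟩).pos, ∅⟩,
        ⟨l.get ⟨i, hi⟩, (hmem _).mpr (l.get_mem _), by simp, rfl⟩, rfl, ?_⟩
      intro x hx
      obtain ⟨s, ⟨j, hj, hjs⟩, rfl⟩ := hpre i hi hx
      have hjl : j < l.length := lt_of_lt_of_le hj (le_of_lt hi)
      have : s = l.get ⟨j, hjl⟩ := by
        have := List.getElem?_eq_getElem hjl
        simp [this] at hjs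
        simp [hjs.symm]
      subst this
      exact IH j hj hjl
end

section
/- Let P be a normal propositional program and ⟨R_i, ⟨IN_i, OUT_i⟩⟩ an ASPeRiX computation for P converging at some step n (i.e., Δ_cho at step n is empty). Then for every i ≥ 1 and every j ≥ i−1, the rule r_i added at step i belongs to GR_P(IN_j). -/
variable {α : Type}

def Dpro (P R : Set (Rule α)) (IN OUT : Set α) : Set (Rule α) :=
  {r ∈ P | r ∉ R ∧ r.pos ⊆ IN ∧ r.neg ⊆ OUT}

def Dcho (P R : Set (Rule α)) (IN : Set α) : Set (Rule α) :=
  {r ∈ P | r ∉ R ∧ r.pos ⊆ IN ∧ r.neg ∩ IN = ∅}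

structure AspComp {α : Type} (P : Set (Rule α)) (bot : α) where
  R : ℕ → Set (Rule α)
  IN : ℕ → Set α
  OUT : ℕ → Set α
  init_R : R 0 = ∅
  init_IN : IN 0 = ∅
  init_OUT : OUT 0 = {bot}
  disj : ∀ i, IN i ∩ OUT i = ∅
  revision : ∀ i, 1 ≤ i →
    (∃ r ∈ Dpro P (R (i-1)) (IN (i-1)) (OUT (i-1)),
        R i = R (i-1) ∪ {r} ∧ IN i = IN (i-1) ∪ {r.head} ∧ OUT i = OUT (i-1)) ∨
    (Dpro P (R (i-1)) (IN (i-1)) (OUT (i-1)) = ∅ ∧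
      ∃ r ∈ Dcho P (R (i-1)) (IN (i-1)),
        R i = R (i-1) ∪ {r} ∧ IN i = IN (i-1) ∪ {r.head} ∧
        OUT i = OUT (i-1) ∪ r.neg) ∨
    (R i = R (i-1) ∧ IN i = IN (i-1) ∧ OUT i = OUT (i-1))
  convergence : ∃ i, Dcho P (R i) (IN i) = ∅

lemma IN_mono {α : Type} {P : Set (Rule α)} {bot : α} (C : AspComp P bot) :
    Monotone C.IN := by
  apply monotone_nat_of_le_succ
  intro k
  have h := C.revision (k+1) (by omega)
  simp only [Nat.add_sub_cancel] at h
  rcases h with ⟨r, _, _, hIN, _⟩ | ⟨_, r, _, _, hIN, _⟩ | ⟨_, hIN, _⟩ <;>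
    rw [hIN] <;> simp [Set.subset_union_left]

lemma OUT_mono {α : Type} {P : Set (Rule α)} {bot : α} (C : AspComp P bot) :
    Monotone C.OUT := by
  apply monotone_nat_of_le_succ
  intro k
  have h := C.revision (k+1) (by omega)
  simp only [Nat.add_sub_cancel] at h
  rcases h with ⟨r, _, _, _, hOUT⟩ | ⟨_, r, _, _, _, hOUT⟩ | ⟨_, _, hOUT⟩ <;>
    rw [hOUT] <;> simp [Set.subset_union_left]

theorem added_rule_generating (α : Type) (P : Set (Rule α)) (bot : α)
    (C : AspComp P bot) (n : ℕ) (hn : Dcho P (C.R n) (C.IN n) = ∅) :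
    ∀ i, 1 ≤ i → ∀ r, r ∈ C.R i → r ∉ C.R (i-1) →
      ∀ j, i - 1 ≤ j → r ∈ GR P (C.IN j) := by
  intro i hi r hrR hrnR j hj
  rcases C.revision i hi with ⟨r', ⟨hP, _, hpos, hneg⟩, hR, _, hOUT⟩ |
      ⟨_, r', ⟨hP, _, hpos, hneg⟩, hR, _, hOUT⟩ | ⟨hR, _, _⟩
  · rw [hR] at hrR
    rcases hrR with h | h
    · exact absurd h hrnR
    · rcases h with rfl
      refine ⟨hP, hpos.trans (IN_mono C hj), ?_⟩
      have h1 : r.neg ⊆ C.OUT j := hneg.trans (OUT_mono C hj)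
      have h2 := C.disj j
      rw [Set.eq_empty_iff_forall_notMem] at h2 ⊢
      intro x hx
      exact h2 x ⟨hx.2, h1 hx.1⟩
  · rw [hR] at hrR
    rcases hrR with h | h
    · exact absurd h hrnR
    · rcases h with rfl
      refine ⟨hP, hpos.trans (IN_mono C hj), ?_⟩
      rcases eq_or_lt_of_le hj with rfl | hj'
      · exact hneg
      · have h1 : r.neg ⊆ C.OUT j := by
          have : C.OUT i ⊆ C.OUT j := OUT_mono C (by omega)
          rw [hOUT] at this
          exact (Set.subset_union_right).trans this
        have h2 := C.disj j
        rw [Set.eq_empty_iff_forall_notMem] at h2 ⊢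
        intro x hx
        exact h2 x ⟨hx.2, h1 hx.1⟩
  · rw [hR] at hrR
    exact absurd hrR hrnR
end

section
/- Let P be a normal propositional program and ⟨R_i, ⟨IN_i, OUT_i⟩⟩ an ASPeRiX computation for P that converges at step n (Δ_cho at step n is empty, and the computation is stable from n on). Then R_n = GR_P(IN_n), where GR_P(X) = { r ∈ P | body⁺(r) ⊆ X, body⁻(r) ∩ X = ∅ }. -/
variable {α : Type}

lemma asp_invariant {α : Type} {P : Set (Rule α)} {bot : α} (C : AspComp P bot) :
    ∀ i, ∀ r ∈ C.R i, r ∈ P ∧ r.pos ⊆ C.IN i ∧ r.neg ⊆ C.OUT i := by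
  intro i
  induction i with
  | zero => simp [C.init_R]
  | succ k ih =>
    intro r hr
    rcases C.revision (k+1) (by omega) with
      ⟨r', hr', hR, hIN, hOUT⟩ | ⟨_, r', hr', hR, hIN, hOUT⟩ | ⟨hR, hIN, hOUT⟩
    · simp only [Nat.add_sub_cancel] at hR hIN hOUT
      rw [hR] at hr; rw [hIN, hOUT]
      rcases hr with hr | hr
      · obtain ⟨hP, hpos, hout⟩ := ih r hr
        exact ⟨hP, hpos.trans (Set.subset_union_left), hout⟩
      · rcases hr with rfl
        obtain ⟨hP, _, hpos, hneg⟩ := hr'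
        exact ⟨hP, hpos.trans (Set.subset_union_left), hneg⟩
    · simp only [Nat.add_sub_cancel] at hR hIN hOUT
      rw [hR] at hr; rw [hIN, hOUT]
      rcases hr with hr | hr
      · obtain ⟨hP, hpos, hout⟩ := ih r hr
        exact ⟨hP, hpos.trans (Set.subset_union_left),
          hout.trans (Set.subset_union_left)⟩
      · rcases hr with rfl
        obtain ⟨hP, _, hpos, _⟩ := hr'
        exact ⟨hP, hpos.trans (Set.subset_union_left), Set.subset_union_right⟩
    · simp only [Nat.add_sub_cancel] at hR hIN hOUT
      rw [hR] at hr; rw [hIN, hOUT]; exact ih r hr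

theorem convergence_R_eq_GR (α : Type) (P : Set (Rule α)) (bot : α)
    (C : AspComp P bot) (n : ℕ) (hn : Dcho P (C.R n) (C.IN n) = ∅)
    (hstab : ∀ j, n ≤ j → C.R j = C.R n ∧ C.IN j = C.IN n ∧ C.OUT j = C.OUT n) :
    C.R n = GR P (C.IN n) := by
  apply Set.Subset.antisymm
  · intro r hr
    obtain ⟨hP, hpos, hout⟩ := asp_invariant C n r hr
    refine ⟨hP, hpos, ?_⟩
    have hd := C.disj n
    ext x; simp only [Set.mem_inter_iff, Set.mem_empty_iff_false, iff_false, not_and]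
    intro hxn hxi
    exact absurd (Set.mem_inter hxi (hout hxn)) (by rw [hd]; exact id)
  · intro r hr
    obtain ⟨hP, hpos, hneg⟩ := hr
    by_contra hnR
    have : r ∈ Dcho P (C.R n) (C.IN n) := ⟨hP, hnR, hpos, hneg⟩
    rw [hn] at this; exact this
end

section
/- Let P be a normal propositional program and ⟨R_i, ⟨IN_i, OUT_i⟩⟩ an ASPeRiX computation for P that converges at step n. Then IN_n is an answer set of P (correctness of ASPeRiX computations). -/
variable {α : Type}

lemma asp_succ {P : Set (Rule α)} {bot : α} (C : AspComp P bot) (i : ℕ) :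
    C.R i ⊆ C.R (i+1) ∧ C.IN i ⊆ C.IN (i+1) ∧ C.OUT i ⊆ C.OUT (i+1) := by
  have h := C.revision (i+1) (by omega)
  simp only [Nat.add_sub_cancel] at h
  rcases h with ⟨r, _, hR, hIN, hOUT⟩ | ⟨_, r, _, hR, hIN, hOUT⟩ | ⟨hR, hIN, hOUT⟩
  · exact ⟨hR ▸ Set.subset_union_left, hIN ▸ Set.subset_union_left, hOUT ▸ subset_rfl⟩
  · exact ⟨hR ▸ Set.subset_union_left, hIN ▸ Set.subset_union_left,
      hOUT ▸ Set.subset_union_left⟩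
  · exact ⟨hR ▸ subset_rfl, hIN ▸ subset_rfl, hOUT ▸ subset_rfl⟩

lemma asp_mono {P : Set (Rule α)} {bot : α} (C : AspComp P bot) {i j : ℕ} (h : i ≤ j) :
    C.R i ⊆ C.R j ∧ C.IN i ⊆ C.IN j ∧ C.OUT i ⊆ C.OUT j := by
  induction j, h using Nat.le_induction with
  | base => exact ⟨subset_rfl, subset_rfl, subset_rfl⟩
  | succ j hij ih =>
    obtain ⟨a, b, c⟩ := asp_succ C j
    exact ⟨ih.1.trans a, ih.2.1.trans b, ih.2.2.trans c⟩

lemma asp_heads {P : Set (Rule α)} {bot : α} (C : AspComp P bot) (i : ℕ) :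
    C.IN i = heads (C.R i) := by
  induction i with
  | zero => simp [C.init_IN, C.init_R, heads]
  | succ i ih =>
    have h := C.revision (i+1) (by omega)
    simp only [Nat.add_sub_cancel] at h
    rcases h with ⟨r, _, hR, hIN, _⟩ | ⟨_, r, _, hR, hIN, _⟩ | ⟨hR, hIN, _⟩ <;>
      rw [hIN, hR, ih] <;> simp [heads, Set.image_union, Set.image_insert_eq]

lemma asp_rules {P : Set (Rule α)} {bot : α} (C : AspComp P bot) (i : ℕ) :
    ∀ r ∈ C.R i, r ∈ P ∧ r.neg ⊆ C.OUT i := by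
  induction i with
  | zero => simp [C.init_R]
  | succ i ih =>
    have h := C.revision (i+1) (by omega)
    simp only [Nat.add_sub_cancel] at h
    have hOm := (asp_succ C i).2.2
    rcases h with ⟨r, hr, hR, _, hOUT⟩ | ⟨_, r, hr, hR, _, hOUT⟩ | ⟨hR, _, hOUT⟩
    · intro s hs
      rw [hR] at hs
      rcases hs with hs | hs
      · exact ⟨(ih s hs).1, (ih s hs).2.trans hOm⟩
      · obtain ⟨hrP, _, _, hneg⟩ := hr
        cases hs; exact ⟨hrP, hneg.trans hOm⟩
    · intro s hs
      rw [hR] at hs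
      rcases hs with hs | hs
      · exact ⟨(ih s hs).1, (ih s hs).2.trans hOm⟩
      · obtain ⟨hrP, _, _, _⟩ := hr
        cases hs; exact ⟨hrP, hOUT ▸ Set.subset_union_right⟩
    · intro s hs
      rw [hR] at hs
      exact ⟨(ih s hs).1, (ih s hs).2.trans hOm⟩

theorem asperix_correctness (α : Type) (P : Set (Rule α)) (bot : α)
    (C : AspComp P bot) (n : ℕ) (hn : Dcho P (C.R n) (C.IN n) = ∅) :
    AnswerSet P (C.IN n) := by
  unfold AnswerSet
  apply Set.Subset.antisymm
  · -- IN n ⊆ Cn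
    intro a ha
    intro X hX
    -- show ∀ i ≤ n, C.IN i ⊆ X
    suffices h : ∀ i, i ≤ n → C.IN i ⊆ X from h n le_rfl ha
    intro i hi
    induction i with
    | zero => simp [C.init_IN]
    | succ i ih =>
      have ih' := ih (by omega)
      have h := C.revision (i+1) (by omega)
      simp only [Nat.add_sub_cancel] at h
      have key : ∀ r : Rule α, r ∈ P → r.pos ⊆ C.IN i → r.neg ⊆ C.OUT (i+1) →
          r.head ∈ X := by
        intro r hrP hpos hneg
        have hnegn : r.neg ∩ C.IN n = ∅ := by
          have hOn : r.neg ⊆ C.OUT n := hneg.trans (asp_mono C hi).2.2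
          have := C.disj n
          ext x
          simp only [Set.mem_inter_iff, Set.mem_empty_iff_false, iff_false, not_and]
          intro hx hxI
          exact absurd (Set.mem_inter hxI (hOn hx)) (by simp [this])
        have : Rule.head r ∈ TP (reduct P (C.IN n)) X := by
          refine ⟨⟨r.head, r.pos, ∅⟩, ⟨r, hrP, hnegn, rfl⟩, rfl, ?_⟩
          exact fun x hx => ih' (hpos hx)
        exact hX this
      rcases h with ⟨r, hr, _, hIN, hOUT⟩ | ⟨_, r, hr, _, hIN, hOUT⟩ | ⟨_, hIN, _⟩
      · obtain ⟨hrP, _, hpos, hneg⟩ := hr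
        rw [hIN]
        rintro x (hx | hx)
        · exact ih' hx
        · cases hx; exact key r hrP hpos (hOUT ▸ hneg)
      · obtain ⟨hrP, _, hpos, _⟩ := hr
        rw [hIN]
        rintro x (hx | hx)
        · exact ih' hx
        · cases hx; exact key r hrP hpos (hOUT ▸ Set.subset_union_right)
      · rw [hIN]; exact ih'
  · -- Cn ⊆ IN n
    apply Set.sInter_subset_of_mem
    intro a ha
    obtain ⟨r', ⟨r, hrP, hneg, hr'⟩, hhead, hpos⟩ := ha
    subst hr'
    simp only at hhead hpos
    by_cases hrR : r ∈ C.R n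
    · rw [asp_heads C n]
      exact ⟨r, hrR, hhead⟩
    · exfalso
      have : r ∈ Dcho P (C.R n) (C.IN n) := ⟨hrP, hrR, hpos, hneg⟩
      rw [hn] at this
      exact this
end
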